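/- Let P be a positive definite 2×2 complex matrix, and suppose that for each x ∈ {0,1,2} there exist positive semidefinite operators Ñ_x^a (a=0,1,2) with Σ_a Ñ_x^a = 𝟙 such that P Ñ_x^a P = β_{a,x} |e*⊥_{a,x}⟩⟨e*⊥_{a,x}| with β_{a,x} > 0 for all a. Then P² = c·𝟙 for some c > 0, and hence P = √c·𝟙 (P is a positive multiple of the identity). -/

import Mathlib

open Matrix Complex Finset
open scoped Kronecker ComplexOrder

/-- Inner product on `ℂ²`. -/
noncomputable def inn (u v : Fin 2 → ℂ) : ℂ := ∑ i, (starRingEnd ℂ) (u i) * v i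

/-- Rank-one operator `|v⟩⟨v|`. -/
noncomputable def outer (v : Fin 2 → ℂ) : Matrix (Fin 2) (Fin 2) ℂ :=
  Matrix.vecMulVec v (star v)

/-- The nine vectors `e_{a,x}` of the paper; first index `a`, second `x`. -/
noncomputable def e : Fin 3 → Fin 3 → Fin 2 → ℂ :=
  ![![![1, 0],
     ![0, 1],
     ![1 / (Real.sqrt 2 : ℂ), Complex.I / (Real.sqrt 2 : ℂ)]],
    ![![1 / 2, (Real.sqrt 3 : ℂ) / 2],
     ![(Real.sqrt 3 : ℂ) / 2, Complex.I / 2],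
     ![1 / (Real.sqrt 2 : ℂ), Complex.exp (7 * (Real.pi : ℂ) * Complex.I / 6) / (Real.sqrt 2 : ℂ)]],
    ![![1 / 2, -((Real.sqrt 3 : ℂ) / 2)],
     ![(Real.sqrt 3 : ℂ) / 2, -(Complex.I / 2)],
     ![1 / (Real.sqrt 2 : ℂ), Complex.exp (-(Real.pi : ℂ) * Complex.I / 6) / (Real.sqrt 2 : ℂ)]]]

/-- A unit vector orthogonal to the componentwise conjugate of `e_{a,x}`. -/
noncomputable def eperp (a x : Fin 3) : Fin 2 → ℂ := ![-(e a x 1), e a x 0]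

/-- The two-qubit maximally entangled state `|φ⁺⟩`. -/
noncomputable def phip : Fin 2 × Fin 2 → ℂ :=
  fun p => if p.1 = p.2 then (1 / (Real.sqrt 2 : ℂ)) else 0

/-- Inner product on `ℂ² ⊗ ℂ²`. -/
noncomputable def inn4 (u v : Fin 2 × Fin 2 → ℂ) : ℂ :=
  ∑ p, (starRingEnd ℂ) (u p) * v p

/-- Rank-one operator on `ℂ² ⊗ ℂ²`. -/
noncomputable def outer4 (v : Fin 2 × Fin 2 → ℂ) : Matrix (Fin 2 × Fin 2) (Fin 2 × Fin 2) ℂ :=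
  Matrix.vecMulVec v (star v)

/-- if `P ≻ 0` and for each `x` there is a POVM `{Ñ_x^a}_a` with
`P Ñ_x^a P = β_{a,x} |e*⊥_{a,x}⟩⟨e*⊥_{a,x}|`, `β_{a,x} > 0`, then `P² = c·𝟙` for some
`c > 0`, and hence `P = √c·𝟙`. -/
lemma exp_val1 : Complex.exp (7 * (Real.pi : ℂ) * Complex.I / 6)
    = -((Real.sqrt 3 : ℂ) / 2) - Complex.I / 2 := by
  have h : 7 * (Real.pi : ℂ) * Complex.I / 6
      = (Real.pi : ℂ) * Complex.I + ((Real.pi / 6 : ℝ) : ℂ) * Complex.I := by push_cast; ring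
  rw [h, Complex.exp_add, Complex.exp_pi_mul_I, Complex.exp_mul_I, ← Complex.ofReal_cos,
    ← Complex.ofReal_sin, Real.cos_pi_div_six, Real.sin_pi_div_six]
  push_cast; ring

lemma exp_val2 : Complex.exp (-(Real.pi : ℂ) * Complex.I / 6)
    = ((Real.sqrt 3 : ℂ) / 2) - Complex.I / 2 := by
  have h : -(Real.pi : ℂ) * Complex.I / 6 = ((-(Real.pi / 6) : ℝ) : ℂ) * Complex.I := by
    push_cast; ring
  rw [h, Complex.exp_mul_I, ← Complex.ofReal_cos, ← Complex.ofReal_sin,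
    Real.cos_neg, Real.sin_neg, Real.cos_pi_div_six, Real.sin_pi_div_six]
  push_cast; ring

lemma exp_val2' : Complex.exp (-((Real.pi : ℂ) * Complex.I) / 6)
    = ((Real.sqrt 3 : ℂ) / 2) - Complex.I / 2 := by
  rw [← exp_val2]; ring_nf

lemma s2c : ((Real.sqrt 2 : ℝ) : ℂ) * ((Real.sqrt 2 : ℝ) : ℂ) = 2 := by
  norm_cast
  rw [Real.mul_self_sqrt] <;> norm_num

lemma s3c : ((Real.sqrt 3 : ℝ) : ℂ) * ((Real.sqrt 3 : ℝ) : ℂ) = 3 := by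
  norm_cast
  rw [Real.mul_self_sqrt] <;> norm_num

-- entry lemmas for x = 0
lemma oA0 : outer (eperp 0 0) 0 1 = 0 := by
  simp [outer, Matrix.vecMulVec_apply, eperp, e]
lemma oA1 : outer (eperp 1 0) 0 1 = -((Real.sqrt 3 : ℂ) / 4) := by
  simp [outer, Matrix.vecMulVec_apply, eperp, e, Matrix.vecHead, Matrix.vecTail]
  ring
lemma oA2 : outer (eperp 2 0) 0 1 = (Real.sqrt 3 : ℂ) / 4 := by
  simp [outer, Matrix.vecMulVec_apply, eperp, e, Matrix.vecHead, Matrix.vecTail]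
  ring

-- entry lemmas for x = 1
lemma oB0 : outer (eperp 0 1) 0 1 = 0 := by
  simp [outer, Matrix.vecMulVec_apply, eperp, e, Matrix.vecHead, Matrix.vecTail]
lemma oB1 : outer (eperp 1 1) 0 1 = -(Complex.I * (Real.sqrt 3 : ℂ) / 4) := by
  simp [outer, Matrix.vecMulVec_apply, eperp, e, Matrix.vecHead, Matrix.vecTail]
  ring
lemma oB2 : outer (eperp 2 1) 0 1 = Complex.I * (Real.sqrt 3 : ℂ) / 4 := by
  simp [outer, Matrix.vecMulVec_apply, eperp, e, Matrix.vecHead, Matrix.vecTail]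
  ring

-- entry lemmas for x = 2
lemma oC0 : outer (eperp 0 2) 0 1 = -(Complex.I / 2) := by
  simp [outer, Matrix.vecMulVec_apply, eperp, e, Matrix.vecHead, Matrix.vecTail]
  rw [← one_div, div_mul_div_comm, s2c]
  ring
lemma oC1 : outer (eperp 1 2) 0 1 = (Real.sqrt 3 : ℂ) / 4 + Complex.I / 4 := by
  simp [outer, Matrix.vecMulVec_apply, eperp, e, Matrix.vecHead, Matrix.vecTail, exp_val1]
  rw [← one_div, div_mul_div_comm, s2c]
  ring
lemma oC2 : outer (eperp 2 2) 0 1 = -((Real.sqrt 3 : ℂ) / 4) + Complex.I / 4 := by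
  simp [outer, Matrix.vecMulVec_apply, eperp, e, Matrix.vecHead, Matrix.vecTail, exp_val2,
    exp_val2']
  rw [← one_div, div_mul_div_comm, s2c]
  ring

lemma oC0d : outer (eperp 0 2) 0 0 = 1 / 2 := by
  simp [outer, Matrix.vecMulVec_apply, eperp, e, Matrix.vecHead, Matrix.vecTail]
  rw [div_mul_div_comm, s2c]
  linear_combination (-(1 : ℂ) / 2) * Complex.I_mul_I
lemma oC1d : outer (eperp 1 2) 0 0 = 1 / 2 := by
  simp [outer, Matrix.vecMulVec_apply, eperp, e, Matrix.vecHead, Matrix.vecTail, exp_val1]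
  rw [div_mul_div_comm, s2c]
  linear_combination (1 / 8 : ℂ) * s3c - (1 / 8 : ℂ) * Complex.I_mul_I
lemma oC2d : outer (eperp 2 2) 0 0 = 1 / 2 := by
  simp [outer, Matrix.vecMulVec_apply, eperp, e, Matrix.vecHead, Matrix.vecTail, exp_val2,
    exp_val2']
  rw [div_mul_div_comm, s2c]
  linear_combination (1 / 8 : ℂ) * s3c - (1 / 8 : ℂ) * Complex.I_mul_I
lemma oCd' : ∀ a, outer (eperp a 2) 1 1 = 1 / 2 := by
  intro a
  fin_cases a <;>
  · simp [outer, Matrix.vecMulVec_apply, eperp, e, Matrix.vecHead, Matrix.vecTail]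
    rw [← one_div, ← one_div, div_mul_div_comm, s2c]
    norm_num

theorem stmt_10 (P : Matrix (Fin 2) (Fin 2) ℂ) (hP : P.PosDef)
    (h : ∀ x : Fin 3, ∃ N : Fin 3 → Matrix (Fin 2) (Fin 2) ℂ,
      (∀ a, (N a).PosSemidef) ∧ (∑ a : Fin 3, N a = 1) ∧
      (∀ a, ∃ β : ℝ, 0 < β ∧ P * N a * P = (β : ℂ) • outer (eperp a x))) :
    ∃ c : ℝ, 0 < c ∧ P ^ 2 = (c : ℂ) • (1 : Matrix (Fin 2) (Fin 2) ℂ) ∧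
      P = ((Real.sqrt c : ℝ) : ℂ) • (1 : Matrix (Fin 2) (Fin 2) ℂ) := by
  obtain ⟨N0, hN0psd, hN0sum, hb0⟩ := h 0
  obtain ⟨N1, hN1psd, hN1sum, hb1⟩ := h 1
  obtain ⟨N2, hN2psd, hN2sum, hb2⟩ := h 2
  choose β hβ hβe using hb0
  choose γ hγ hγe using hb1
  choose δ hδ hδe using hb2
  have key0 : P * P = ∑ a : Fin 3, (β a : ℂ) • outer (eperp a 0) := by
    calc P * P = P * (∑ a : Fin 3, N0 a) * P := by rw [hN0sum, mul_one]
    _ = ∑ a : Fin 3, P * N0 a * P := by rw [Finset.mul_sum, Finset.sum_mul]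
    _ = _ := Finset.sum_congr rfl fun a _ => hβe a
  have key1 : P * P = ∑ a : Fin 3, (γ a : ℂ) • outer (eperp a 1) := by
    calc P * P = P * (∑ a : Fin 3, N1 a) * P := by rw [hN1sum, mul_one]
    _ = ∑ a : Fin 3, P * N1 a * P := by rw [Finset.mul_sum, Finset.sum_mul]
    _ = _ := Finset.sum_congr rfl fun a _ => hγe a
  have key2 : P * P = ∑ a : Fin 3, (δ a : ℂ) • outer (eperp a 2) := by
    calc P * P = P * (∑ a : Fin 3, N2 a) * P := by rw [hN2sum, mul_one]
    _ = ∑ a : Fin 3, P * N2 a * P := by rw [Finset.mul_sum, Finset.sum_mul]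
    _ = _ := Finset.sum_congr rfl fun a _ => hδe a
  -- entry (0,1) from x = 0 : purely real
  have h01a := congrFun (congrFun key0 0) 1
  simp only [Matrix.sum_apply, Matrix.smul_apply, Fin.sum_univ_three, oA0, oA1, oA2,
    smul_eq_mul, mul_zero, zero_add] at h01a
  -- entry (0,1) from x = 1 : purely imaginary
  have h01b := congrFun (congrFun key1 0) 1
  simp only [Matrix.sum_apply, Matrix.smul_apply, Fin.sum_univ_three, oB0, oB1, oB2,
    smul_eq_mul, mul_zero, zero_add] at h01b
  have hp01 : (P * P) 0 1 = 0 := by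
    have him := congrArg Complex.im h01a
    have hre := congrArg Complex.re h01b
    simp only [Complex.add_im, Complex.add_re, Complex.mul_im, Complex.mul_re,
      Complex.neg_im, Complex.neg_re, Complex.div_im, Complex.div_re, Complex.I_im,
      Complex.I_re, Complex.ofReal_im, Complex.ofReal_re, Complex.zero_im, Complex.zero_re,
      Complex.im_ofNat, Complex.re_ofNat] at him hre
    norm_num at him hre
    exact Complex.ext (by simpa using hre) (by simpa using him)
  -- entry (0,1) from x = 2 : forces δ0 = δ1 = δ2
  have h01c := congrFun (congrFun key2 0) 1
  rw [hp01] at h01c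
  simp only [Matrix.sum_apply, Matrix.smul_apply, Fin.sum_univ_three, oC0, oC1, oC2,
    smul_eq_mul] at h01c
  have hre := congrArg Complex.re h01c
  have him := congrArg Complex.im h01c
  simp only [Complex.add_im, Complex.add_re, Complex.mul_im, Complex.mul_re,
    Complex.neg_im, Complex.neg_re, Complex.div_im, Complex.div_re, Complex.I_im,
    Complex.I_re, Complex.ofReal_im, Complex.ofReal_re, Complex.zero_im, Complex.zero_re,
    Complex.im_ofNat, Complex.re_ofNat] at hre him
  norm_num at hre him
  have h3p : (0 : ℝ) < Real.sqrt 3 := Real.sqrt_pos.mpr (by norm_num)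
  have hd12 : δ 1 = δ 2 := by
    have h1 : Real.sqrt 3 / 4 * δ 1 - Real.sqrt 3 / 4 * δ 2 = 0 := by
      rw [eq_comm] at hre; nlinarith [hre]
    nlinarith [h1, h3p]
  have hd01 : δ 0 = δ 1 := by nlinarith [him, hd12]
  -- the constant
  set c : ℝ := (δ 0 + δ 1 + δ 2) / 2 with hc
  have hcpos : 0 < c := by have := hδ 0; have := hδ 1; have := hδ 2; positivity
  -- diagonal entries
  have h00 := congrFun (congrFun key2 0) 0
  simp only [Matrix.sum_apply, Matrix.smul_apply, Fin.sum_univ_three, oC0d, oC1d, oC2d,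
    smul_eq_mul] at h00
  have h11 := congrFun (congrFun key2 1) 1
  simp only [Matrix.sum_apply, Matrix.smul_apply, Fin.sum_univ_three, oCd',
    smul_eq_mul] at h11
  -- P² = c • 1
  have hPP : P * P = (c : ℂ) • (1 : Matrix (Fin 2) (Fin 2) ℂ) := by
    have hherm : (P * P)ᴴ = P * P := by
      rw [Matrix.conjTranspose_mul, hP.isHermitian.eq]
    have hp10 : (P * P) 1 0 = 0 := by
      have := congrFun (congrFun hherm 1) 0
      rw [Matrix.conjTranspose_apply, hp01] at this
      simpa using this.symm
    ext i j
    fin_cases i <;> fin_cases j <;>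
      simp only [Matrix.smul_apply, smul_eq_mul, Fin.zero_eta, Fin.mk_one]
    · rw [h00]; norm_num [Matrix.one_apply, hc]; push_cast; ring
    · rw [hp01]; norm_num [Matrix.one_apply]
    · rw [hp10]; norm_num [Matrix.one_apply]
    · rw [h11]; norm_num [Matrix.one_apply, hc]; push_cast; ring
  have hPsq : P ^ 2 = (c : ℂ) • (1 : Matrix (Fin 2) (Fin 2) ℂ) := by rw [sq, hPP]
  refine ⟨c, hcpos, hPsq, ?_⟩
  -- uniqueness of PSD square roots
  have hsm : ((((Real.sqrt c : ℝ)) : ℂ) • (1 : Matrix (Fin 2) (Fin 2) ℂ)).PosSemidef := by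
    rw [Matrix.posSemidef_iff_dotProduct_mulVec]
    constructor
    · unfold Matrix.IsHermitian
      rw [Matrix.conjTranspose_smul, Matrix.conjTranspose_one]
      congr 1
      simp [Complex.conj_ofReal]
    · intro x
      rw [Matrix.smul_mulVec, Matrix.one_mulVec, dotProduct_smul]
      have h1 : (0 : ℂ) ≤ ((Real.sqrt c : ℝ) : ℂ) := by
        rw [Complex.zero_le_real]; exact Real.sqrt_nonneg c
      have h2 := dotProduct_star_self_nonneg x
      rw [smul_eq_mul]
      exact mul_nonneg h1 h2
  have hsq2 : ((((Real.sqrt c : ℝ)) : ℂ) • (1 : Matrix (Fin 2) (Fin 2) ℂ)) ^ 2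
      = (c : ℂ) • (1 : Matrix (Fin 2) (Fin 2) ℂ) := by
    rw [smul_pow, one_pow]
    congr 1
    rw [← Complex.ofReal_pow, Real.sq_sqrt hcpos.le]
  open scoped MatrixOrder in
  exact (CFC.sq_eq_sq_iff P _ hP.posSemidef.nonneg hsm.nonneg).mp (hPsq.trans hsq2.symm)
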